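/- Let A be an integral domain, let f ∈ A be a nonzero nonunit, and let d ≥ 1 and N ≥ 1 be integers. Let α be an N×N matrix over A satisfying α^d = f · I_N. Then the map α : A^N → A^N is injective, its cokernel M is a nonzero A-module annihilated by f, M is not projective, and consequently M has projective dimension exactly 1 over A (the exact sequence 0 → A^N → A^N → M → 0 is a projective resolution of minimal length). -/
import Mathlib


/-- **Projective dimension one.** Let `A` be an integral domain, `f ∈ A` a nonzero
nonunit, `d ≥ 1`, `N ≥ 1`, and let `α` be an `N × N` matrix over `A` with
`α ^ d = f • 1`. Then `α : A^N → A^N` is injective, its cokernel `M` is a nonzero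
`A`-module annihilated by `f`, `M` is not projective, and consequently `M` has projective
dimension exactly `1`: the exact sequence `0 → A^N → A^N → M → 0` (injectivity of `α`
together with exactness of `A^N → A^N → M → 0`) is a projective resolution of minimal
length. -/
theorem coker_pd_one_of_clifford_relation
    {A : Type*} [CommRing A] [IsDomain A]
    (f : A) (hf0 : f ≠ 0) (hfu : ¬ IsUnit f)
    (d N : ℕ) (hd : 1 ≤ d) (hN : 1 ≤ N)
    (α : Matrix (Fin N) (Fin N) A)
    (hα : α ^ d = f • (1 : Matrix (Fin N) (Fin N) A)) :
    Function.Injective α.mulVecLin ∧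
    Nontrivial ((Fin N → A) ⧸ LinearMap.range α.mulVecLin) ∧
    (∀ x : (Fin N → A) ⧸ LinearMap.range α.mulVecLin, f • x = 0) ∧
    ¬ Module.Projective A ((Fin N → A) ⧸ LinearMap.range α.mulVecLin) ∧
    Function.Exact α.mulVecLin (LinearMap.range α.mulVecLin).mkQ ∧
    Function.Surjective (LinearMap.range α.mulVecLin).mkQ := by
  -- `α^d v = f • v` for all `v`
  have hpow : ∀ v : Fin N → A, (α ^ d).mulVec v = f • v := by
    intro v
    rw [hα, Matrix.smul_mulVec, Matrix.one_mulVec]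
  -- Injectivity
  have hinj : Function.Injective α.mulVecLin := by
    rw [injective_iff_map_eq_zero]
    intro v hv
    have h1 : (α ^ d).mulVec v = 0 := by
      obtain ⟨e, rfl⟩ := Nat.exists_eq_add_of_le hd
      rw [add_comm, pow_add, pow_one, ← Matrix.mulVec_mulVec]
      simpa using congrArg (α ^ e).mulVec hv
    have h2 : f • v = 0 := by rw [← hpow v, h1]
    funext i
    have := congrFun h2 i
    simp only [Pi.smul_apply, smul_eq_mul, Pi.zero_apply] at this
    rcases mul_eq_zero.mp this with h | h
    · exact absurd h hf0
    · exact h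
  -- f kills the quotient
  have hann : ∀ x : (Fin N → A) ⧸ LinearMap.range α.mulVecLin, f • x = 0 := by
    intro x
    obtain ⟨v, rfl⟩ := Submodule.mkQ_surjective _ x
    rw [← map_smul, ← hpow v]
    obtain ⟨e, rfl⟩ := Nat.exists_eq_add_of_le hd
    rw [pow_add, pow_one, ← Matrix.mulVec_mulVec]
    exact (Submodule.Quotient.mk_eq_zero _).mpr ⟨(α ^ e).mulVec v, rfl⟩
  -- Nontriviality: otherwise α is surjective hence a unit matrix, so f is a unit
  have hnt : Nontrivial ((Fin N → A) ⧸ LinearMap.range α.mulVecLin) := by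
    by_contra h
    have hsurj : Function.Surjective α.mulVec := by
      intro v
      have : (Submodule.mkQ (LinearMap.range α.mulVecLin)) v = 0 := by
        haveI := not_nontrivial_iff_subsingleton.mp h
        exact Subsingleton.elim _ _
      rw [Submodule.mkQ_apply, Submodule.Quotient.mk_eq_zero] at this
      obtain ⟨w, hw⟩ := this
      exact ⟨w, hw⟩
    have hu : IsUnit α := Matrix.mulVec_surjective_iff_isUnit.mp hsurj
    have hdet : IsUnit α.det := α.isUnit_iff_isUnit_det.mp hu
    have : IsUnit (f ^ N) := by
      have := congrArg Matrix.det hα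
      rw [Matrix.det_pow, Matrix.smul_one_eq_diagonal, Matrix.det_diagonal] at this
      simp only [Finset.prod_const, Finset.card_univ, Fintype.card_fin] at this
      rw [← this]
      exact hdet.pow d
    obtain ⟨m, rfl⟩ := Nat.exists_eq_add_of_le hN
    rw [add_comm, pow_add, pow_one] at this
    exact hfu (isUnit_of_mul_isUnit_right this)
  -- Not projective
  have hnp : ¬ Module.Projective A ((Fin N → A) ⧸ LinearMap.range α.mulVecLin) := by
    intro hproj
    obtain ⟨s, hs⟩ := Module.projective_lifting_property
      (Submodule.mkQ (LinearMap.range α.mulVecLin)) LinearMap.id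
      (Submodule.mkQ_surjective _)
    obtain ⟨x, hx⟩ := exists_ne (0 : (Fin N → A) ⧸ LinearMap.range α.mulVecLin)
    have h1 : f • s x = 0 := by rw [← map_smul, hann x, map_zero]
    have h2 : s x = 0 := by
      funext i
      have := congrFun h1 i
      simp only [Pi.smul_apply, smul_eq_mul, Pi.zero_apply] at this
      rcases mul_eq_zero.mp this with h | h
      · exact absurd h hf0
      · exact h
    apply hx
    have := congrArg (Submodule.mkQ (LinearMap.range α.mulVecLin)) h2
    rwa [map_zero, ← LinearMap.comp_apply, hs, LinearMap.id_apply] at this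
  exact ⟨hinj, hnt, hann, hnp, LinearMap.exact_map_mkQ_range _,
    Submodule.mkQ_surjective _⟩
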